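/- arXiv:2307.11746 — 2 statements merged into one kernel-verified Lean document; each statement's English description precedes it below -/
import Mathlib

section
/- Let K be a field of characteristic p > 0 with K/k finitely generated, k = ⋂_n K^{p^n}. Then Diff_k^{≤ p^{n-1}}(K) ⊆ Diff_{K^{p^n}}(K) for all n ≥ 1, and consequently Diff_k(K) = ⋃_{n≥0} Diff_{K^{p^n}}(K). -/
set_option maxHeartbeats 1000000
set_option synthInstance.maxHeartbeats 400000


/-- The subfield `K^{p^n}` of `p^n`-th powers of `K`. -/
noncomputable def pfield (K : Type*) [Field K] (p : ℕ) [hp : Fact p.Prime] [CharP K p]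
    (n : ℕ) : Subfield K :=
  haveI : ExpChar K p := .prime hp.out
  (iterateFrobenius K p n).fieldRange

/-- The subfield `k = ⋂_{n ≥ 0} K^{p^n}`. -/
noncomputable def kfield (K : Type*) [Field K] (p : ℕ) [Fact p.Prime] [CharP K p] : Subfield K :=
  ⨅ n : ℕ, pfield K p n

/-- A power tower on `K`: a sequence of subfields with `W j = W i · K^{p^j}` for `j ≤ i`. -/
def IsPowerTower (K : Type*) [Field K] (p : ℕ) [Fact p.Prime] [CharP K p]
    (W : ℕ → Subfield K) : Prop :=
  ∀ ⦃i j : ℕ⦄, j ≤ i → W j = W i ⊔ pfield K p j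

/-- The degree `[A : B]` for subfields `B ≤ A` of `K` (computed as `[B ⊔ A : B]`). -/
noncomputable def relrank {K : Type*} [Field K] (B A : Subfield K) : ℕ :=
  letI := (Subfield.inclusion (le_sup_left : B ≤ B ⊔ A)).toAlgebra
  Module.finrank ↥B ↥(B ⊔ A)

/-- Finiteness of the degree `[A : B]` (as `[B ⊔ A : B]`). -/
def finRel {K : Type*} [Field K] (B A : Subfield K) : Prop :=
  letI := (Subfield.inclusion (le_sup_left : B ≤ B ⊔ A)).toAlgebra
  FiniteDimensional ↥B ↥(B ⊔ A)

/-- The commutator `[a, D] = a∘D − D∘a` of multiplication by `a` with an operator `D`. -/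
def Brk {R A : Type*} [CommSemiring R] [CommRing A] [Algebra R A]
    (a : A) (D : A →ₗ[R] A) : A →ₗ[R] A :=
  (LinearMap.mulLeft R a).comp D - D.comp (LinearMap.mulLeft R a)

/-- `OrdLE n D`: `D` is a differential operator of order at most `n`, i.e. all iterated
commutators `[a₀,[a₁,…,[aₙ,D]…]]` with `n+1` multiplications vanish. -/
def OrdLE {R A : Type*} [CommSemiring R] [CommRing A] [Algebra R A] :
    ℕ → (A →ₗ[R] A) → Prop
  | 0, D => ∀ a : A, Brk a D = 0
  | n + 1, D => ∀ a : A, OrdLE n (Brk a D)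

/-- `D` is a differential operator (of some finite order) on `A` relative to `R`. -/
def IsDiffOp (R A : Type*) [CommSemiring R] [CommRing A] [Algebra R A]
    (D : A →ₗ[R] A) : Prop :=
  ∃ n : ℕ, OrdLE n D


section BrkBasics

variable {R A : Type*} [CommSemiring R] [CommRing A] [Algebra R A]

theorem brk_apply (a : A) (D : A →ₗ[R] A) (x : A) :
    Brk a D x = a * D x - D (a * x) := rfl

theorem brk_D0 (a : A) : Brk a (0 : A →ₗ[R] A) = 0 := by
  ext x; simp [brk_apply]

theorem brk_Dadd (a : A) (D D' : A →ₗ[R] A) :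
    Brk a (D + D') = Brk a D + Brk a D' := by
  ext x; simp [brk_apply]; ring

theorem brk_smul (a c : A) (D : A →ₗ[R] A) :
    Brk a (c • D) = c • Brk a D := by
  ext x; simp [brk_apply]; ring

theorem brk_add_left (a b : A) (D : A →ₗ[R] A) :
    Brk (a + b) D = Brk a D + Brk b D := by
  ext x; simp [brk_apply, add_mul, mul_add]; ring

theorem brk_zero_left (D : A →ₗ[R] A) : Brk (0 : A) D = 0 := by
  ext x; simp [brk_apply]

theorem brk_comm (a b : A) (D : A →ₗ[R] A) :
    Brk a (Brk b D) = Brk b (Brk a D) := by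
  ext x
  simp only [brk_apply, mul_sub, map_sub]
  rw [mul_left_comm b a x]
  ring

theorem brk_eq_mulLR (a : A) (D : A →ₗ[R] A) :
    Brk a D = (LinearMap.mulLeft R (LinearMap.mulLeft R a)
      - LinearMap.mulRight R (LinearMap.mulLeft R a)) D := by
  ext x
  simp [brk_apply, LinearMap.mulLeft_apply, LinearMap.mulRight_apply, Module.End.mul_apply]

theorem charP_end_end (p : ℕ) [CharP A p] :
    CharP (Module.End R (Module.End R A)) p := by
  constructor
  intro q
  constructor
  · intro h
    have h1 : (q : Module.End R (Module.End R A)) (1 : Module.End R A) = 0 := by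
      rw [h]; rfl
    rw [Module.End.natCast_apply] at h1
    have h2 : ((q • (1 : Module.End R A)) : Module.End R A) (1 : A) = 0 := by
      rw [h1]; rfl
    rw [LinearMap.smul_apply] at h2
    have h3 : (q : A) = 0 := by
      simpa [nsmul_eq_mul] using h2
    exact (CharP.cast_eq_zero_iff A p q).mp h3
  · rintro ⟨t, rfl⟩
    ext D x
    rw [LinearMap.zero_apply, LinearMap.zero_apply, Module.End.natCast_apply,
      LinearMap.smul_apply]
    rw [mul_smul]
    have : (p : A) = 0 := CharP.cast_eq_zero A p
    simp [nsmul_eq_mul, this]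

theorem brk_iterate_pow (p : ℕ) [Fact p.Prime] [CharP A p] (n : ℕ) (a : A)
    (D : A →ₗ[R] A) :
    (fun D' : A →ₗ[R] A => Brk a D')^[p ^ n] D = Brk (a ^ p ^ n) D := by
  haveI := charP_end_end (R := R) (A := A) p
  set u : Module.End R A := LinearMap.mulLeft R a with hu
  set X : Module.End R (Module.End R A) := LinearMap.mulLeft R u with hX
  set Y : Module.End R (Module.End R A) := LinearMap.mulRight R u with hY
  have hstep : ∀ D' : A →ₗ[R] A, Brk a D' = (X - Y) D' := fun D' => brk_eq_mulLR a D'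
  have hiter : ∀ (m : ℕ) (D' : A →ₗ[R] A),
      (fun D' : A →ₗ[R] A => Brk a D')^[m] D' = ((X - Y) ^ m) D' := by
    intro m
    induction m with
    | zero => intro D'; simp
    | succ m ih =>
      intro D'
      rw [Function.iterate_succ_apply]
      show (fun D' : A →ₗ[R] A => Brk a D')^[m] (Brk a D') = _
      rw [hstep D', ih, pow_succ, Module.End.mul_apply]
  have hsub : (X - Y) ^ p ^ n = X ^ p ^ n - Y ^ p ^ n := by
    exact sub_pow_char_pow_of_commute (R := Module.End R (Module.End R A)) p n (LinearMap.commute_mulLeft_right u u)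
  rw [hiter, hsub]
  have hXp : X ^ p ^ n = LinearMap.mulLeft R (LinearMap.mulLeft R (a ^ p ^ n)) := by
    rw [hX, LinearMap.pow_mulLeft, hu, LinearMap.pow_mulLeft]
  have hYp : Y ^ p ^ n = LinearMap.mulRight R (LinearMap.mulLeft R (a ^ p ^ n)) := by
    rw [hY, LinearMap.pow_mulRight, hu, LinearMap.pow_mulLeft]
  rw [LinearMap.sub_apply, hXp, hYp, ← LinearMap.sub_apply, ← brk_eq_mulLR]

theorem brk_ordLE {m : ℕ} {D : A →ₗ[R] A} (h : OrdLE m D) (a : A) :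
    OrdLE m (Brk a D) := by
  induction m generalizing D with
  | zero =>
    intro b
    rw [brk_comm, h b, brk_D0]
  | succ m ih =>
    intro b
    rw [brk_comm]
    exact ih (h b)

theorem ordLE_succ {m : ℕ} {D : A →ₗ[R] A} (h : OrdLE m D) : OrdLE (m + 1) D :=
  fun a => brk_ordLE h a

theorem ordLE_mono {m m' : ℕ} (hm : m ≤ m') {D : A →ₗ[R] A} (h : OrdLE m D) :
    OrdLE m' D := by
  induction hm with
  | refl => exact h
  | step _ ih => exact ordLE_succ ih

theorem ordLE_iterate {m : ℕ} {D : A →ₗ[R] A} (h : OrdLE m D) (c : A) :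
    (fun D' : A →ₗ[R] A => Brk c D')^[m + 1] D = 0 := by
  induction m generalizing D with
  | zero => simpa using h c
  | succ m ih =>
    rw [Function.iterate_succ_apply]
    exact ih (h c)

theorem brk_pow_eq_zero {p : ℕ} [Fact p.Prime] [CharP A p] {n : ℕ} (hn : 1 ≤ n)
    {D : A →ₗ[R] A} (hD : OrdLE (p ^ (n - 1)) D) (c : A) :
    Brk (c ^ p ^ n) D = 0 := by
  have hp2 : 2 ≤ p := (Fact.out : p.Prime).two_le
  have h1le : 1 ≤ p ^ (n - 1) := Nat.one_le_pow _ _ (by omega)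
  have hle : p ^ (n - 1) + 1 ≤ p ^ n := by
    calc p ^ (n - 1) + 1 ≤ p ^ (n - 1) * 2 := by omega
    _ ≤ p ^ (n - 1) * p := Nat.mul_le_mul_left _ hp2
    _ = p ^ (n - 1 + 1) := (pow_succ p (n - 1)).symm
    _ = p ^ n := by congr 1; omega
  have h1 := ordLE_iterate hD c
  have h2 : (fun D' : A →ₗ[R] A => Brk c D')^[p ^ n] D = 0 := by
    rw [show p ^ n = (p ^ n - (p ^ (n - 1) + 1)) + (p ^ (n - 1) + 1) by omega,
      Function.iterate_add_apply, h1]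
    exact Function.iterate_fixed (brk_D0 c) _
  rw [← brk_iterate_pow p n c D]
  exact h2

end BrkBasics

section Backward

variable {K : Type*} [Field K] {R : Type*} [CommSemiring R] [Algebra R K]

theorem ordLE_of_subfield_comm (K' : Subfield K) (p n : ℕ) [Fact p.Prime] [CharP K p]
    (hpow : ∀ c : K, c ^ p ^ n ∈ K') (hfin : FiniteDimensional ↥K' K)
    (D : K →ₗ[R] K) (h0 : ∀ c ∈ K', Brk c D = 0) :
    ∃ m : ℕ, OrdLE m D := by
  classical
  obtain ⟨d, e, hspan⟩ := Module.Finite.exists_fin (R := ↥K') (M := K)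
  set q := p ^ n with hq
  have hq1 : 1 ≤ q := Nat.one_le_pow _ _ (Fact.out : p.Prime).pos
  set f : Fin d → (K →ₗ[R] K) → (K →ₗ[R] K) := fun i D' => Brk (e i) D' with hf
  haveI hlc : LeftCommutative f := ⟨fun i j D' => brk_comm (e i) (e j) D'⟩
  -- the commutation property preserved along foldr
  set P : (K →ₗ[R] K) → Prop := fun D' => ∀ c ∈ K', Brk c D' = 0 with hP
  have hPD : P D := h0
  have hPbrk : ∀ (a : K) (D'), P D' → P (Brk a D') := by
    intro a D' hD' c hc
    rw [brk_comm, hD' c hc, brk_D0]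
  have hPfold : ∀ (l : List (Fin d)) (D'), P D' → P (List.foldr f D' l) := by
    intro l
    induction l with
    | nil => intro D' h; exact h
    | cons i l ih => intro D' h; exact hPbrk _ _ (ih D' h)
  -- iterating Brk (e i) at least q times on a K'-linear map kills it
  have hiterzero : ∀ (i : Fin d) (c : ℕ), q ≤ c → ∀ D', P D' →
      (fun D'' : K →ₗ[R] K => Brk (e i) D'')^[c] D' = 0 := by
    intro i c hc D' hD'
    rw [show c = (c - q) + q by omega, Function.iterate_add_apply, hq,
      brk_iterate_pow p n, hD' _ (hpow (e i))]
    exact Function.iterate_fixed (brk_D0 _) _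
  have hfold0 : ∀ l : List (Fin d), List.foldr f 0 l = 0 := by
    intro l
    induction l with
    | nil => rfl
    | cons i l ih => show Brk (e i) (List.foldr f 0 l) = 0; rw [ih, brk_D0]
  have hrep : ∀ (c : ℕ) (i : Fin d) (D' : K →ₗ[R] K),
      List.foldr f D' (List.replicate c i) = (fun D'' : K →ₗ[R] K => Brk (e i) D'')^[c] D' := by
    intro c i D'
    induction c with
    | zero => rfl
    | succ c ih =>
      rw [List.replicate_succ, List.foldr_cons, ih, Function.iterate_succ_apply']
  -- vanishing of long products
  have hvanish : ∀ l : List (Fin d), d * (q - 1) < l.length → List.foldr f D l = 0 := by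
    intro l hl
    have hex : ∃ i : Fin d, q ≤ l.count i := by
      by_contra hcon
      push_neg at hcon
      have hlen : l.length = ∑ i : Fin d, l.count i := by
        have h1 := (Multiset.toFinset_sum_count_eq (l : Multiset (Fin d))).symm
        rw [Finset.sum_subset (Finset.subset_univ _) (fun i _ hi =>
          Multiset.count_eq_zero.mpr (fun h => hi (Multiset.mem_toFinset.mpr h)))] at h1
        simpa using h1
      have hb : ∑ i : Fin d, l.count i ≤ ∑ _i : Fin d, (q - 1) :=
        Finset.sum_le_sum (fun i _ => by have := hcon i; omega)
      simp only [Finset.sum_const, Finset.card_univ, Fintype.card_fin, smul_eq_mul] at hb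
      omega
    obtain ⟨i, hi⟩ := hex
    have hperm : (List.filter (fun x => !(x == i)) l ++ List.filter (fun x => x == i) l).Perm l := by
      simpa using List.filter_append_perm (fun x => !(x == i)) l
    rw [← hperm.foldr_eq D, List.foldr_append, List.filter_beq, hrep,
      hiterzero i _ hi D hPD, hfold0]
  -- the filtration
  set W : ℕ → Submodule K (K →ₗ[R] K) := fun j =>
    Submodule.span K {D' | ∃ l : List (Fin d), l.length = j ∧ D' = List.foldr f D l} with hW
  have hW0 : D ∈ W 0 := Submodule.subset_span ⟨[], rfl, rfl⟩
  -- one Brk step climbs the filtration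
  have hstep : ∀ (j : ℕ) (a : K), ∀ D' ∈ W j, Brk a D' ∈ W (j + 1) := by
    intro j a D' hD'
    refine Submodule.span_induction ?_ ?_ ?_ ?_ hD'
    · rintro D'' ⟨l, hl, rfl⟩
      have hlin : P (List.foldr f D l) := hPfold l D hPD
      have ha : a ∈ Submodule.span ↥K' (Set.range e) := by rw [hspan]; trivial
      clear hD'
      refine Submodule.span_induction ?_ ?_ ?_ ?_ ha
      · rintro b ⟨i, rfl⟩
        exact Submodule.subset_span ⟨i :: l, by simp [hl], rfl⟩
      · rw [brk_zero_left]
        exact (W (j + 1)).zero_mem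
      · intro b c _ _ ihb ihc
        rw [brk_add_left]
        exact add_mem ihb ihc
      · intro μ b _ ihb
        have hmul : Brk ((μ : K) * b) (List.foldr f D l)
            = (μ : K) • Brk b (List.foldr f D l) := by
          have hcm : ∀ y : K, List.foldr f D l ((μ : K) * y) = (μ : K) * List.foldr f D l y := by
            intro y
            have := hlin (μ : K) μ.2
            have h5 : Brk (μ : K) (List.foldr f D l) y = 0 := by rw [this]; rfl
            rw [brk_apply] at h5
            exact (sub_eq_zero.mp h5).symm
          ext x
          rw [brk_apply, LinearMap.smul_apply, brk_apply, mul_assoc (μ : K) b x,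
            hcm (b * x), smul_eq_mul]
          ring
        have : (μ • b) = (μ : K) * b := rfl
        rw [this, hmul]
        exact Submodule.smul_mem _ _ ihb
    · rw [brk_D0]
      exact (W (j + 1)).zero_mem
    · intro x y _ _ ihx ihy
      rw [brk_Dadd]
      exact add_mem ihx ihy
    · intro c x _ ihx
      rw [brk_smul]
      exact Submodule.smul_mem _ _ ihx
  -- high filtration steps vanish
  have hWtop : ∀ j : ℕ, d * (q - 1) < j → W j ≤ ⊥ := by
    intro j hj
    rw [hW]
    refine Submodule.span_le.mpr ?_
    rintro D'' ⟨l, hl, rfl⟩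
    simp only [SetLike.mem_coe, Submodule.mem_bot]
    exact hvanish l (by omega)
  -- main induction
  have main : ∀ (m j : ℕ), d * (q - 1) ≤ j + m → ∀ D' ∈ W j, OrdLE m D' := by
    intro m
    induction m with
    | zero =>
      intro j hj D' hD'
      intro a
      have h1 : Brk a D' ∈ W (j + 1) := hstep j a D' hD'
      simpa using hWtop (j + 1) (by omega) h1
    | succ m ih =>
      intro j hj D' hD' a
      exact ih (j + 1) (by omega) _ (hstep j a D' hD')
  exact ⟨d * (q - 1), main _ 0 (by omega) D hW0⟩

end Backward

/-- `Diff_k^{≤ p^{n-1}}(K) ⊆ Diff_{K^{p^n}}(K)` for `n ≥ 1` (operators of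
order at most `p^{n-1}` are `K^{p^n}`-linear), and consequently `Diff_k(K)` is the union
of the `Diff_{K^{p^n}}(K) = End_{K^{p^n}}(K)`: a `k`-linear operator is a differential
operator iff it is `K^{p^n}`-linear for some `n`. -/
theorem stmt8 {K : Type*} [Field K] (p : ℕ) [Fact p.Prime] [CharP K p]
    (hfg : ∃ s : Finset K, IntermediateField.adjoin ↥(kfield K p) (s : Set K) = ⊤) :
    (∀ n : ℕ, 1 ≤ n → ∀ D : K →ₗ[↥(kfield K p)] K, OrdLE (p ^ (n - 1)) D →
        ∀ c x : K, D (c ^ p ^ n * x) = c ^ p ^ n * D x) ∧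
    ∀ D : K →ₗ[↥(kfield K p)] K,
      IsDiffOp ↥(kfield K p) K D ↔ ∃ n : ℕ, ∀ c x : K, D (c ^ p ^ n * x) = c ^ p ^ n * D x := by
  classical
  haveI : ExpChar K p := .prime (Fact.out : p.Prime)
  have hpf : ∀ n : ℕ, ∀ c : K, c ^ p ^ n ∈ pfield K p n := by
    intro n c
    exact ⟨c, iterateFrobenius_def p n c⟩
  have part1 : ∀ n : ℕ, 1 ≤ n → ∀ D : K →ₗ[↥(kfield K p)] K, OrdLE (p ^ (n - 1)) D →
      ∀ c x : K, D (c ^ p ^ n * x) = c ^ p ^ n * D x := by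
    intro n hn D hD c x
    have h := brk_pow_eq_zero hn hD c
    have h2 : Brk (c ^ p ^ n) D x = 0 := by rw [h]; rfl
    rw [brk_apply] at h2
    exact (sub_eq_zero.mp h2).symm
  refine ⟨part1, ?_⟩
  intro D
  constructor
  · rintro ⟨m, hm⟩
    refine ⟨m + 1, fun c x => ?_⟩
    have hle : m ≤ p ^ m := le_of_lt (Nat.lt_pow_self (Fact.out : p.Prime).one_lt)
    have hD' : OrdLE (p ^ ((m + 1) - 1)) D := by
      simpa using ordLE_mono hle hm
    exact part1 (m + 1) (by omega) D hD' c x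
  · rintro ⟨n, hn⟩
    set K' := pfield K p n with hK'
    have h0 : ∀ c ∈ K', Brk c D = 0 := by
      intro c hc
      obtain ⟨y, hy⟩ := hc
      rw [iterateFrobenius_def] at hy
      ext x
      rw [brk_apply, ← hy, hn y x, sub_self, LinearMap.zero_apply]
    have hkle : kfield K p ≤ K' := iInf_le _ n
    -- finite dimensionality of K over K'
    obtain ⟨s, hs⟩ := hfg
    have hint : ∀ x : K, IsIntegral ↥K' x := by
      intro x
      refine ⟨Polynomial.X ^ (p ^ n) - Polynomial.C ⟨x ^ p ^ n, hpf n x⟩,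
        Polynomial.monic_X_pow_sub_C _ (pow_ne_zero _ (Fact.out : p.Prime).ne_zero), ?_⟩
      simp only [Polynomial.eval₂_sub, Polynomial.eval₂_pow, Polynomial.eval₂_X,
        Polynomial.eval₂_C]
      show x ^ p ^ n - (x ^ p ^ n) = 0
      ring
    have htop : IntermediateField.adjoin ↥K' ((s : Set K)) = ⊤ := by
      refine eq_top_iff.mpr ?_
      intro x _
      have hx : x ∈ IntermediateField.adjoin ↥(kfield K p) (s : Set K) := by
        rw [hs]; trivial
      refine IntermediateField.adjoin_induction (↥(kfield K p))
        (p := fun y _ => y ∈ IntermediateField.adjoin ↥K' (s : Set K))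
        ?_ ?_ ?_ ?_ ?_ hx
      · exact fun y hy => IntermediateField.subset_adjoin _ _ hy
      · intro c
        have hc : (c : K) ∈ K' := hkle c.2
        exact (IntermediateField.adjoin ↥K' (s : Set K)).algebraMap_mem (⟨(c : K), hc⟩ : ↥K')
      · exact fun a b _ _ ha hb => add_mem ha hb
      · exact fun a _ ha => inv_mem ha
      · exact fun a b _ _ ha hb => mul_mem ha hb
    haveI hfd : FiniteDimensional ↥K' ↥(IntermediateField.adjoin ↥K' (s : Set K)) :=
      IntermediateField.finiteDimensional_adjoin (fun x _ => hint x)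
    rw [htop] at hfd
    haveI : FiniteDimensional ↥K' K :=
      LinearEquiv.finiteDimensional (IntermediateField.topEquiv
        (F := ↥K') (E := K)).toLinearEquiv
    exact ordLE_of_subfield_comm K' p n (hpf n) inferInstance D h0
end

section
/- Let K be a field of characteristic p > 0 with K/k finitely generated, k = ⋂_n K^{p^n}. Let W ⊆ K be any subfield and W_n := W · K^{p^n} its power tower. Then the field of first integrals W_∞ := ⋂_{n≥0} W_n equals the separable closure of k·W in K. In particular, W ↦ ⋂_n (W · K^{p^n}) is the identity on subfields W with k ⊆ W ⊆ K that are separably closed in K. -/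
open Polynomial IntermediateField


/-- The separable closure of a subfield `W` inside `K`, as a subfield of `K`. -/
noncomputable def sepCl {K : Type*} [Field K] (W : Subfield K) : Subfield K :=
  (separableClosure ↥W K).toSubfield

set_option maxHeartbeats 1000000
set_option synthInstance.maxHeartbeats 1000000


section PT
variable {K : Type*} [Field K] (p : ℕ) [hp : Fact p.Prime] [CharP K p]

lemma PT.expChar : ExpChar K p := .prime hp.out

attribute [local instance] PT.expChar

variable {p}

lemma mem_pfield_iff {n : ℕ} {x : K} : x ∈ pfield K p n ↔ ∃ y : K, y ^ p ^ n = x := by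
  simp only [pfield, RingHom.mem_fieldRange, iterateFrobenius_def]

lemma pow_mem_pfield (n : ℕ) (y : K) : y ^ p ^ n ∈ pfield K p n :=
  mem_pfield_iff.2 ⟨y, rfl⟩

lemma pfield_antitone : Antitone (pfield K p) := by
  intro i j hij z hz
  obtain ⟨y, rfl⟩ := mem_pfield_iff.1 hz
  refine mem_pfield_iff.2 ⟨y ^ p ^ (j - i), ?_⟩
  rw [← pow_mul, ← pow_add, Nat.sub_add_cancel hij]

lemma kfield_le_pfield (n : ℕ) : kfield K p ≤ pfield K p n := iInf_le _ n

lemma pfield_zero : pfield K p 0 = ⊤ := by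
  ext x; simp only [Subfield.mem_top, iff_true, mem_pfield_iff, pow_zero, pow_one]
  exact ⟨x, rfl⟩

lemma map_frobenius_pfield (n : ℕ) :
    (pfield K p n).map (frobenius K p) = pfield K p (n + 1) := by
  ext z
  simp only [Subfield.mem_map, mem_pfield_iff, frobenius_def]
  constructor
  · rintro ⟨w, ⟨y, rfl⟩, rfl⟩
    exact ⟨y, by rw [← pow_mul, pow_succ]⟩
  · rintro ⟨y, rfl⟩
    exact ⟨y ^ p ^ n, ⟨y, rfl⟩, by rw [← pow_mul, pow_succ]⟩

lemma map_frobenius_le_self (S : Subfield K) : S.map (frobenius K p) ≤ S := by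
  rintro z ⟨w, hw, rfl⟩
  exact pow_mem hw p

lemma Subfield.map_closure (f : K →+* K) (s : Set K) :
    (Subfield.closure s).map f = Subfield.closure (f '' s) := by
  apply le_antisymm
  · rw [Subfield.map_le_iff_le_comap, Subfield.closure_le]
    intro x hx
    exact Subfield.mem_comap.2 (Subfield.subset_closure ⟨x, hx, rfl⟩)
  · rw [Subfield.closure_le]
    rintro _ ⟨x, hx, rfl⟩
    exact ⟨x, Subfield.subset_closure hx, rfl⟩

/-- Membership in `IntermediateField.adjoin` over a subfield equals membership in the
subfield sup with the subfield closure. -/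
lemma mem_adjoin_subfield_iff (L : Subfield K) (S : Set K) {x : K} :
    x ∈ IntermediateField.adjoin ↥L S ↔ x ∈ L ⊔ Subfield.closure S := by
  have h1 : Set.range (algebraMap ↥L K) = (L : Set K) := Subtype.range_coe
  have : x ∈ IntermediateField.adjoin ↥L S ↔ x ∈ (IntermediateField.adjoin ↥L S).toSubfield :=
    Iff.rfl
  rw [this, adjoin_toSubfield, h1, Subfield.closure_union, Subfield.closure_eq]

variable {K : Type*} [Field K]

/-- An element of a separable intermediate extension is separable over the base. -/
lemma isSeparable_of_mem_sep {F : Type*} [Field F] [Algebra F K] {E : IntermediateField F K}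
    [Algebra.IsSeparable F E] {x : K} (hx : x ∈ E) : IsSeparable F x := by
  have h := Algebra.IsSeparable.isSeparable F (⟨x, hx⟩ : E)
  have h2 : minpoly F ((algebraMap E K) (⟨x, hx⟩ : E)) = minpoly F (⟨x, hx⟩ : E) :=
    minpoly.algebraMap_eq (algebraMap E K).injective _
  have h3 : (algebraMap E K) (⟨x, hx⟩ : E) = x := rfl
  rwa [IsSeparable, ← h2, h3] at h

lemma IsSeparable.pow' {F : Type*} [Field F] [Algebra F K] {x : K}
    (hx : IsSeparable F x) (m : ℕ) : IsSeparable F (x ^ m) := by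
  haveI : Algebra.IsSeparable F (adjoin F {x}) :=
    (isSeparable_adjoin_iff_isSeparable F K).mpr fun y hy => by
      rw [Set.mem_singleton_iff] at hy; rwa [hy]
  exact isSeparable_of_mem_sep (pow_mem (subset_adjoin F {x} rfl) m)

variable (p : ℕ) [hp : Fact p.Prime] [CharP K p]

lemma exists_pow_isSeparable (L : Subfield K) (x : K) (hx : IsIntegral ↥L x) :
    ∃ m : ℕ, IsSeparable ↥L (x ^ p ^ m) := by
  haveI : CharP ↥L p := Subfield.charP L p
  obtain ⟨n, g, hsep, heq⟩ :=
    Polynomial.exists_separable_of_irreducible p (minpoly.irreducible hx) hp.out.ne_zero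
  refine ⟨n, Polynomial.Separable.of_dvd hsep (minpoly.dvd _ _ ?_)⟩
  rw [← Polynomial.expand_aeval, heq, minpoly.aeval]

lemma sep_ppow_mem (L : Subfield K) (x : K) (hsep : IsSeparable ↥L x) (hmem : x ^ p ∈ L) :
    x ∈ L := by
  haveI : CharP ↥L p := Subfield.charP L p
  haveI : ExpChar ↥L p := .prime hp.out
  haveI : Algebra.IsSeparable ↥L (adjoin ↥L {x}) :=
    (isSeparable_adjoin_iff_isSeparable ↥L K).mpr fun y hy => by
      rw [Set.mem_singleton_iff] at hy; rwa [hy]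
  have h := adjoin_eq_adjoin_pow_expChar_pow_of_isSeparable ↥L K {x} p 1
  rw [Set.image_singleton, pow_one] at h
  have hx : x ∈ adjoin ↥L ({x ^ p} : Set K) := h ▸ subset_adjoin ↥L {x} rfl
  rw [mem_adjoin_subfield_iff] at hx
  have : Subfield.closure ({x ^ p} : Set K) ≤ L :=
    Subfield.closure_le.mpr (Set.singleton_subset_iff.mpr hmem)
  rwa [sup_of_le_left this] at hx
lemma mem_ringClosure_rep (L : Subfield K) (t : K) {x : K}
    (hx : x ∈ Subring.closure ((L : Set K) ∪ {t})) :
    ∃ f : Polynomial ↥L, aeval t f = x := by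
  have hle : Subring.closure ((L : Set K) ∪ {t}) ≤
      ((Polynomial.aeval t : Polynomial ↥L →ₐ[↥L] K).range).toSubring := by
    rw [Subring.closure_le]
    rintro y (hy | hy)
    · exact ⟨C ⟨y, hy⟩, by simp only [AlgHom.toRingHom_eq_coe, RingHom.coe_coe, aeval_C]; rfl⟩
    · rw [Set.mem_singleton_iff] at hy
      exact ⟨X, by simp only [AlgHom.toRingHom_eq_coe, RingHom.coe_coe, aeval_X]; exact hy.symm ▸ rfl⟩
  obtain ⟨f, hf⟩ := hle hx
  exact ⟨f, hf⟩

lemma descend_transcendental (L : Subfield K) {t x : K} (ht : Transcendental ↥L t)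
    (hx : x ∈ L ⊔ Subfield.closure {t}) (hxp : x ^ p ∈ L) : x ∈ L := by
  by_cases hx0 : x = 0
  · rw [hx0]; exact zero_mem L
  rw [← Subfield.closure_eq L, ← Subfield.closure_union] at hx
  obtain ⟨a, ha, b, hb, hab⟩ := Subfield.mem_closure_iff.1 hx
  obtain ⟨f, rfl⟩ := mem_ringClosure_rep L t ha
  obtain ⟨g, rfl⟩ := mem_ringClosure_rep L t hb
  have hbne : aeval t g ≠ 0 := by
    intro h; exact hx0 (by rw [← hab, h, div_zero])
  have hfeq : aeval t f = x * aeval t g := by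
    rw [div_eq_iff hbne] at hab; rw [hab]
  set c : ↥L := ⟨x ^ p, hxp⟩ with hc
  have key : f ^ p = C c * g ^ p := by
    by_contra hne
    refine ht ⟨f ^ p - C c * g ^ p, sub_ne_zero.mpr hne, ?_⟩
    rw [map_sub, map_pow, map_mul, map_pow, aeval_C, hfeq]
    have : (algebraMap ↥L K) c = x ^ p := rfl
    rw [this, mul_pow]
    ring
  have hgne : g ≠ 0 := by
    intro h; apply hbne; rw [h, map_zero]
  have hfne : f ≠ 0 := by
    intro h
    apply hx0
    rw [h, map_zero] at hfeq
    rcases mul_eq_zero.1 hfeq.symm with h1 | h1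
    · exact h1
    · exact absurd h1 hbne
  have hlc := congrArg leadingCoeff key
  rw [leadingCoeff_pow, leadingCoeff_mul, leadingCoeff_C, leadingCoeff_pow] at hlc
  set u : ↥L := f.leadingCoeff / g.leadingCoeff with hu
  have hup : u ^ p = c := by
    rw [hu, div_pow, hlc]
    field_simp [leadingCoeff_ne_zero.mpr hgne]
  have hxu : ((u : K)) ^ p = x ^ p := by
    have : ((u ^ p : ↥L) : K) = x ^ p := by rw [hup]
    rwa [SubmonoidClass.coe_pow] at this
  haveI : ExpChar K p := .prime hp.out
  have := frobenius_inj K p (a₁ := (u : K)) (a₂ := x) (by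
    simp only [frobenius_def]; exact hxu)
  rw [← this]; exact u.2
lemma nat_antitone_stab {f : ℕ → ℕ} (hf : ∀ {i j : ℕ}, i ≤ j → f j ≤ f i) :
    ∃ N, ∀ n, N ≤ n → f n = f N := by
  have hne : (Set.range f).Nonempty := ⟨f 0, 0, rfl⟩
  obtain ⟨N, hN⟩ := Nat.sInf_mem hne
  exact ⟨N, fun n hn => le_antisymm (hN ▸ hf hn) (hN ▸ Nat.sInf_le ⟨n, rfl⟩)⟩

lemma le_sepClosure_subfield (L : Subfield K) :
    L ≤ (separableClosure ↥L K).toSubfield := fun z hz =>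
  (separableClosure ↥L K).algebraMap_mem ⟨z, hz⟩

lemma map_iterateFrobenius_le_self (S : Subfield K) (m : ℕ) :
    haveI : ExpChar K p := .prime hp.out
    S.map (iterateFrobenius K p m) ≤ S := by
  haveI : ExpChar K p := .prime hp.out
  rintro _ ⟨w, hw, rfl⟩
  rw [iterateFrobenius_def]
  exact pow_mem hw _

/-- Key finite-dimensional lemma: if `E/L` is finite and `E = L ⊔ E^p`, then `E/L`
is separable. -/
lemma sep_of_sup_frob (L : Subfield K) (E : IntermediateField ↥L K)
    [FiniteDimensional ↥L ↥E]
    (hE : E.toSubfield = L ⊔ E.toSubfield.map (frobenius K p)) :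
    ∀ x ∈ E, IsSeparable ↥L x := by
  haveI : ExpChar K p := .prime hp.out
  have hLE : L ≤ E.toSubfield := fun z hz => E.algebraMap_mem ⟨z, hz⟩
  -- iterate the Frobenius identity
  have hiter : ∀ m, E.toSubfield = L ⊔ E.toSubfield.map (iterateFrobenius K p m) := by
    intro m
    induction m with
    | zero =>
        rw [iterateFrobenius_zero]
        have : E.toSubfield.map (RingHom.id K) = E.toSubfield := by
          ext z; simp [Subfield.mem_map]
        rw [this, sup_of_le_right hLE]
    | succ m ih =>
        have hmap := congrArg (Subfield.map (iterateFrobenius K p m)) hE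
        have hc : (iterateFrobenius K p m).comp (frobenius K p) = iterateFrobenius K p (m + 1) := by
          rw [← iterateFrobenius_one K p, ← iterateFrobenius_add]
        rw [Subfield.map_sup, Subfield.map_map, hc] at hmap
        conv_lhs => rw [ih, hmap]
        rw [← sup_assoc, sup_of_le_left (map_iterateFrobenius_le_self p L m)]
  -- spanning set coming from a basis
  let b := Module.finBasis ↥L ↥E
  set Z : Set K := Set.range (fun i => ((b i : ↥E) : K)) with hZ
  have hZE : Z ⊆ E.toSubfield := by rintro _ ⟨i, rfl⟩; exact (b i).2
  have hEZ : E.toSubfield = L ⊔ Subfield.closure Z := by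
    apply le_antisymm
    · intro z hz
      have hz' : (⟨z, hz⟩ : ↥E) ∈ Submodule.span ↥L (Set.range b) := by
        rw [b.span_eq]; trivial
      have key : ((⟨z, hz⟩ : ↥E) : K) ∈ L ⊔ Subfield.closure Z := by
        refine Submodule.span_induction
          (p := fun (v : ↥E) (_ : v ∈ Submodule.span ↥L (Set.range ⇑b)) => ((v : K) ∈ L ⊔ Subfield.closure Z)) ?_ ?_ ?_ ?_ hz'
        · rintro _ ⟨i, rfl⟩
          exact le_sup_right (α := Subfield K) (Subfield.subset_closure ⟨i, rfl⟩)
        · exact zero_mem _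
        · intro u v _ _ hu hv; exact add_mem hu hv
        · intro c v _ hv
          have hcv : ((c • v : ↥E) : K) = (c : K) * (v : K) := rfl
          rw [hcv]
          exact mul_mem (le_sup_left (α := Subfield K) c.2) hv
      exact key
    · exact sup_le hLE (Subfield.closure_le.mpr hZE)
  -- uniform exponent
  have hex : ∀ i, ∃ mi : ℕ, IsSeparable ↥L (((b i : ↥E) : K) ^ p ^ mi) := by
    intro i
    refine exists_pow_isSeparable p L _ ?_
    exact (IsIntegral.of_finite ↥L (b i)).map E.val
  choose mf hmf using hex
  set e : ℕ := Finset.univ.sup mf with he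
  have hsepZ : ∀ i, IsSeparable ↥L (((b i : ↥E) : K) ^ p ^ e) := by
    intro i
    have hle : mf i ≤ e := Finset.le_sup (Finset.mem_univ i)
    have : ((b i : ↥E) : K) ^ p ^ e = (((b i : ↥E) : K) ^ p ^ mf i) ^ p ^ (e - mf i) := by
      rw [← pow_mul, ← pow_add, Nat.add_sub_cancel' hle]
    rw [this]
    exact (hmf i).pow' _
  -- everything lands in the separable closure
  set T := (separableClosure ↥L K).toSubfield with hT
  have hmapT : E.toSubfield.map (iterateFrobenius K p e) ≤ T := by
    rw [hEZ, Subfield.map_sup, Subfield.map_closure]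
    apply sup_le
    · exact le_trans (map_iterateFrobenius_le_self p L e) (le_sepClosure_subfield L)
    · rw [Subfield.closure_le]
      rintro _ ⟨z, ⟨i, rfl⟩, rfl⟩
      rw [iterateFrobenius_def]
      exact mem_separableClosure_iff.mpr (hsepZ i)
  have hET : E.toSubfield ≤ T := by
    rw [hiter e]
    exact sup_le (le_sepClosure_subfield L) hmapT
  intro x hx
  exact mem_separableClosure_iff.mp (hET hx)
/-- The power-tower intermediate field `L ⊔ K^{p^n}` over `L`. -/
noncomputable def En (L : Subfield K) (n : ℕ) : IntermediateField ↥L K :=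
  Subfield.toIntermediateField (L ⊔ pfield K p n)
    (fun y => le_sup_left (α := Subfield K) y.2)

lemma En_toSubfield (L : Subfield K) (n : ℕ) :
    (En p L n).toSubfield = L ⊔ pfield K p n := rfl

lemma mem_En_iff {L : Subfield K} {n : ℕ} {x : K} :
    x ∈ En p L n ↔ x ∈ L ⊔ pfield K p n := Iff.rfl

/-- Core claim: if `K` is finitely generated over `L`, `x^p ∈ L` and
`x ∈ L·K^{p^n}` for all `n`, then `x ∈ L`. -/
lemma claimN : ∀ (s : Finset K) (L : Subfield K),
    (L ⊔ Subfield.closure ↑s = ⊤) → ∀ {x : K}, x ^ p ∈ L →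
    (∀ n, x ∈ L ⊔ pfield K p n) → x ∈ L := by
  classical
  intro s
  induction s using Finset.strongInduction with
  | _ s ih =>
    intro L htop x hxp hx
    by_cases hall : ∀ a ∈ s, IsIntegral ↥L a
    · -- all generators are algebraic: K/L is finite
      have hadj : IntermediateField.adjoin ↥L (↑s : Set K) = ⊤ := by
        rw [eq_top_iff]
        intro z _
        rw [mem_adjoin_subfield_iff, htop]
        trivial
      haveI : Finite (↑s : Set K) := s.finite_toSet
      haveI hfd1 : FiniteDimensional ↥L ↥(IntermediateField.adjoin ↥L (↑s : Set K)) :=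
        IntermediateField.finiteDimensional_adjoin (fun a ha => hall a ha)
      haveI hfdtop : FiniteDimensional ↥L ↥(⊤ : IntermediateField ↥L K) := hadj ▸ hfd1
      haveI hfdK : FiniteDimensional ↥L K :=
        Module.Finite.equiv (IntermediateField.topEquiv (F := ↥L) (E := K)).toLinearEquiv
      -- the chain `L ⊔ K^{p^n}` stabilizes
      have hanti : ∀ {i j : ℕ}, i ≤ j → En p L j ≤ En p L i := by
        intro i j hij z hz
        rw [mem_En_iff] at hz ⊢
        exact sup_le_sup_left (pfield_antitone hij) L hz
      have hfr : ∀ {i j : ℕ}, i ≤ j →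
          Module.finrank ↥L ↥(En p L j) ≤ Module.finrank ↥L ↥(En p L i) := by
        intro i j hij
        exact Submodule.finrank_mono
          (show (En p L j).toSubalgebra.toSubmodule ≤ (En p L i).toSubalgebra.toSubmodule
            from hanti hij)
      obtain ⟨N, hN⟩ := nat_antitone_stab (f := fun n => Module.finrank ↥L ↥(En p L n))
        (fun hij => hfr hij)
      have hstab : ∀ n, N ≤ n → En p L n = En p L N := by
        intro n hn
        exact IntermediateField.eq_of_le_of_finrank_le (hanti hn) (hN n hn).ge
      -- Frobenius identity for the stable field
      haveI : ExpChar K p := .prime hp.out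
      have hE : (En p L N).toSubfield = L ⊔ (En p L N).toSubfield.map (frobenius K p) := by
        rw [En_toSubfield, Subfield.map_sup, map_frobenius_pfield, ← sup_assoc,
          sup_of_le_left (map_frobenius_le_self (p := p) L)]
        have h1 : L ⊔ pfield K p (N + 1) = (En p L (N + 1)).toSubfield := rfl
        rw [h1, hstab (N + 1) (Nat.le_succ N)]
        rfl
      have hxE : x ∈ En p L N := by rw [mem_En_iff]; exact hx N
      have hsep := sep_of_sup_frob p L (En p L N) hE x hxE
      exact sep_ppow_mem p L x hsep hxp
    · -- some generator is transcendental over L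
      push_neg at hall
      obtain ⟨t, hts, htr⟩ := hall
      have htr' : Transcendental ↥L t := fun h => htr h.isIntegral
      set L' := L ⊔ Subfield.closure {t} with hL'
      have hLL' : L ≤ L' := le_sup_left
      have htop' : L' ⊔ Subfield.closure ↑(s.erase t) = ⊤ := by
        rw [eq_top_iff, ← htop]
        apply sup_le
        · exact le_trans hLL' le_sup_left
        · rw [Subfield.closure_le]
          intro a ha
          by_cases hat : a = t
          · subst hat
            exact le_sup_left (α := Subfield K)
              (le_sup_right (α := Subfield K) (Subfield.subset_closure rfl))
          · exact le_sup_right (α := Subfield K)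
              (Subfield.subset_closure (Finset.mem_erase.mpr ⟨hat, ha⟩))
      have hx' : x ∈ L' := by
        refine ih (s.erase t) (Finset.erase_ssubset hts) L' htop' (hLL' hxp) ?_
        intro n
        exact sup_le_sup_right hLL' (pfield K p n) (hx n)
      exact descend_transcendental p L htr' hx' hxp
/-- Master lemma: if `K/L` is finitely generated and `x ∈ L·K^{p^n}` for all `n`,
then `x` is separable algebraic over `L`. -/
lemma isSeparable_of_mem_all_levels (s : Finset K) (L : Subfield K)
    (htop : L ⊔ Subfield.closure ↑s = ⊤)
    {x : K} (hx : ∀ n, x ∈ L ⊔ pfield K p n) : IsSeparable ↥L x := by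
  classical
  -- Step 1: x ∈ L(x^p)
  set L1 := L ⊔ Subfield.closure {x ^ p} with hL1
  have hmem : x ∈ L1 := by
    refine claimN p s L1 ?_ ?_ ?_
    · rw [eq_top_iff, ← htop]
      exact sup_le (le_trans le_sup_left le_sup_left) le_sup_right
    · exact le_sup_right (α := Subfield K) (Subfield.subset_closure rfl)
    · intro n
      exact sup_le_sup_right (le_sup_left : L ≤ L1) (pfield K p n) (hx n)
  by_cases hx0 : x = 0
  · subst hx0
    have h0 : (0 : K) ∈ L := zero_mem L
    have : IsSeparable ↥L ((algebraMap ↥L K) (0 : ↥L)) := by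
      rw [IsSeparable, minpoly.eq_X_sub_C]
      exact separable_X_sub_C
    simpa using this
  -- Step 2: x is algebraic over L
  have hint : IsIntegral ↥L x := by
    have hmem' := hmem
    rw [hL1, ← Subfield.closure_eq L, ← Subfield.closure_union] at hmem'
    obtain ⟨a, ha, b, hb, hab⟩ := Subfield.mem_closure_iff.1 hmem'
    obtain ⟨f, rfl⟩ := mem_ringClosure_rep L (x ^ p) ha
    obtain ⟨g, rfl⟩ := mem_ringClosure_rep L (x ^ p) hb
    have hbne : aeval (x ^ p) g ≠ 0 := by
      intro h; exact hx0 (by rw [← hab, h, div_zero])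
    have hgne : g ≠ 0 := by intro h; apply hbne; rw [h, map_zero]
    have hfeq : aeval (x ^ p) f = x * aeval (x ^ p) g := by
      rw [div_eq_iff hbne] at hab; rw [hab]
    set Q : Polynomial ↥L := X * expand ↥L p g - expand ↥L p f with hQ
    have hQ0 : aeval x Q = 0 := by
      rw [hQ, map_sub, map_mul, aeval_X, expand_aeval, expand_aeval, hfeq, sub_self]
    have hQne : Q ≠ 0 := by
      intro h
      have hcoeff := congrArg (fun q => Polynomial.coeff q (p * g.natDegree + 1)) h
      simp only [hQ, coeff_sub, coeff_zero] at hcoeff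
      rw [Polynomial.coeff_X_mul] at hcoeff
      rw [Polynomial.coeff_expand hp.out.pos, Polynomial.coeff_expand hp.out.pos] at hcoeff
      have hd1 : p ∣ p * g.natDegree := Dvd.intro _ rfl
      have hd2 : ¬ p ∣ p * g.natDegree + 1 := by
        rw [Nat.dvd_add_right hd1, Nat.dvd_one]
        exact hp.out.one_lt.ne'
      rw [if_pos hd1, if_neg hd2, sub_zero, Nat.mul_div_cancel_left _ hp.out.pos] at hcoeff
      exact leadingCoeff_ne_zero.mpr hgne hcoeff
    exact (IsAlgebraic.isIntegral ⟨Q, hQne, hQ0⟩)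
  -- Step 3: separability
  by_contra hns
  haveI : CharP ↥L p := Subfield.charP L p
  rcases Polynomial.separable_or p (minpoly.irreducible hint) with hsep | ⟨_, g, hgirr, hgexp⟩
  · exact hns hsep
  · have hroot : aeval (x ^ p) g = 0 := by
      have h := minpoly.aeval ↥L x
      rw [← hgexp, expand_aeval] at h
      exact h
    have hint2 : IsIntegral ↥L (x ^ p) := hint.pow p
    have hdeg1 : (minpoly ↥L (x ^ p)).natDegree ≤ g.natDegree :=
      Polynomial.natDegree_le_of_dvd (minpoly.dvd ↥L (x ^ p) hroot) hgirr.ne_zero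
    have hdegf : (minpoly ↥L x).natDegree = g.natDegree * p := by
      rw [← hgexp, natDegree_expand]
    have hgpos : 0 < g.natDegree := hgirr.natDegree_pos
    have hle : IntermediateField.adjoin ↥L {x} ≤ IntermediateField.adjoin ↥L {x ^ p} := by
      rw [IntermediateField.adjoin_le_iff]
      intro z hz
      rw [Set.mem_singleton_iff] at hz
      subst hz
      rw [SetLike.mem_coe, mem_adjoin_subfield_iff]
      exact hmem
    haveI : FiniteDimensional ↥L ↥(IntermediateField.adjoin ↥L ({x ^ p} : Set K)) := by
      have := IntermediateField.adjoin.finiteDimensional hint2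
      exact this
    haveI : Module.Finite ↥L
        ↥(Subalgebra.toSubmodule (IntermediateField.adjoin ↥L ({x ^ p} : Set K)).toSubalgebra) :=
      IntermediateField.adjoin.finiteDimensional hint2
    have hrank : Module.finrank ↥L ↥(IntermediateField.adjoin ↥L ({x} : Set K)) ≤
        Module.finrank ↥L ↥(IntermediateField.adjoin ↥L ({x ^ p} : Set K)) :=
      Submodule.finrank_mono
        (show (IntermediateField.adjoin ↥L ({x} : Set K)).toSubalgebra.toSubmodule ≤
          (IntermediateField.adjoin ↥L ({x ^ p} : Set K)).toSubalgebra.toSubmodule from hle)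
    have h1 : Module.finrank ↥L ↥(IntermediateField.adjoin ↥L ({x} : Set K)) =
        (minpoly ↥L x).natDegree := IntermediateField.adjoin.finrank hint
    have h2 : Module.finrank ↥L ↥(IntermediateField.adjoin ↥L ({x ^ p} : Set K)) =
        (minpoly ↥L (x ^ p)).natDegree := IntermediateField.adjoin.finrank hint2
    rw [h1, h2] at hrank
    have hplt : 2 ≤ p := hp.out.two_le
    nlinarith [hdeg1, hdegf, hgpos, hrank]
lemma subfield_top_of_adjoin_top (s : Finset K)
    (hs : IntermediateField.adjoin ↥(kfield K p) (↑s : Set K) = ⊤) :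
    kfield K p ⊔ Subfield.closure ↑s = ⊤ := by
  rw [eq_top_iff]
  intro z _
  have hz : z ∈ IntermediateField.adjoin ↥(kfield K p) (↑s : Set K) := hs ▸ trivial
  rwa [mem_adjoin_subfield_iff] at hz

/-- The separable closure of `kfield ⊔ W` is contained in every `W ⊔ K^{p^n}`. -/
lemma sepCl_le_tower (W : Subfield K) (n : ℕ) :
    sepCl (kfield K p ⊔ W) ≤ W ⊔ pfield K p n := by
  set V := kfield K p ⊔ W with hV
  intro x hx
  have hx1 : x ∈ separableClosure ↥V K := (mem_toSubfield _ _).mp hx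
  have hsep : IsSeparable ↥V x := mem_separableClosure_iff.mp hx1
  haveI : CharP ↥V p := Subfield.charP V p
  haveI : ExpChar ↥V p := .prime hp.out
  haveI : Algebra.IsSeparable ↥V ↥(IntermediateField.adjoin ↥V ({x} : Set K)) :=
    (isSeparable_adjoin_iff_isSeparable ↥V K).mpr fun y hy => by
      rw [Set.mem_singleton_iff] at hy; rwa [hy]
  have h := adjoin_eq_adjoin_pow_expChar_pow_of_isSeparable ↥V K {x} p n
  rw [Set.image_singleton] at h
  have hx2 : x ∈ IntermediateField.adjoin ↥V ({x ^ p ^ n} : Set K) :=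
    h ▸ subset_adjoin ↥V {x} rfl
  rw [mem_adjoin_subfield_iff] at hx2
  have hle : V ⊔ Subfield.closure {x ^ p ^ n} ≤ W ⊔ pfield K p n := by
    apply sup_le
    · exact sup_le (le_trans (kfield_le_pfield n) le_sup_right) le_sup_left
    · rw [Subfield.closure_le]
      intro y hy
      rw [Set.mem_singleton_iff] at hy
      subst hy
      exact le_sup_right (α := Subfield K) (pow_mem_pfield n x)
  exact hle hx2

/-- The key theorem: the field of first integrals equals the separable closure. -/
lemma tower_iInf_eq_sepCl
    (hfg : ∃ s : Finset K, IntermediateField.adjoin ↥(kfield K p) (↑s : Set K) = ⊤)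
    (W : Subfield K) :
    (⨅ n : ℕ, W ⊔ pfield K p n) = sepCl (kfield K p ⊔ W) := by
  obtain ⟨s, hs⟩ := hfg
  have htop := subfield_top_of_adjoin_top p s hs
  apply le_antisymm
  · -- hard direction
    intro x hx
    rw [Subfield.mem_iInf] at hx
    set V := kfield K p ⊔ W with hV
    set T := separableClosure ↥V K with hT
    set L : Subfield K := sepCl V with hL
    have hVL : V ≤ L := fun z hz => (mem_toSubfield _ _).mpr (T.algebraMap_mem ⟨z, hz⟩)
    have htopL : L ⊔ Subfield.closure ↑s = ⊤ := by
      rw [eq_top_iff, ← htop]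
      exact sup_le (le_trans (le_trans le_sup_left hVL) le_sup_left) le_sup_right
    have hxall : ∀ n, x ∈ L ⊔ pfield K p n := fun n =>
      sup_le_sup_right (le_trans (le_sup_right : W ≤ V) hVL) (pfield K p n) (hx n)
    have hsepL : IsSeparable ↥L x := isSeparable_of_mem_all_levels p s L htopL hxall
    letI : Algebra ↥V ↥L := (Subfield.inclusion hVL).toAlgebra
    haveI : IsScalarTower ↥V ↥L K := IsScalarTower.of_algebraMap_eq (fun v => rfl)
    haveI : Algebra.IsSeparable ↥V ↥L := by
      refine ⟨fun z => ?_⟩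
      have hz : (z : K) ∈ T := (mem_toSubfield _ _).mp z.2
      have h1 : IsSeparable ↥V ((z : K)) := mem_separableClosure_iff.mp hz
      have h2 := minpoly.algebraMap_eq (A := ↥V) (algebraMap ↥L K).injective z
      have h3 : (algebraMap ↥L K) z = (z : K) := rfl
      rw [h3] at h2
      rw [IsSeparable, ← h2]
      exact h1
    have hfinal : IsSeparable ↥V x :=
      IsSeparable.of_algebra_isSeparable_of_isSeparable ↥V hsepL
    exact (mem_toSubfield _ _).mpr (mem_separableClosure_iff.mpr hfinal)
  · exact le_iInf fun n => sepCl_le_tower p W n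

end PT


/-- for any subfield `W ⊆ K`, the field of first integrals
`W_∞ = ⋂_n (W · K^{p^n})` equals the separable closure of `k·W` in `K`; in particular
`W ↦ ⋂_n (W · K^{p^n})` is the identity on subfields containing `k` that are separably
closed in `K`. -/
theorem stmt11 {K : Type*} [Field K] (p : ℕ) [Fact p.Prime] [CharP K p]
    (hfg : ∃ s : Finset K, IntermediateField.adjoin ↥(kfield K p) (s : Set K) = ⊤)
    (W : Subfield K) :
    (⨅ n : ℕ, W ⊔ pfield K p n) = sepCl (kfield K p ⊔ W) ∧
    ∀ V : Subfield K, kfield K p ≤ V → sepCl V = V →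
      (⨅ n : ℕ, V ⊔ pfield K p n) = V := by
  refine ⟨tower_iInf_eq_sepCl p hfg W, fun V hkV hsV => ?_⟩
  rw [tower_iInf_eq_sepCl p hfg V, sup_eq_right.mpr hkV, hsV]
end
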